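/- For every symplectic spinor s ∈ P, the spinor-valued 2-form ψ := Σ_{i,j} ω_{ij} ε^i∧ε^j ⊗ s satisfies X²Y²ψ = l·ψ. -/

import Mathlib

noncomputable section

open Finset MvPolynomial

/-- The space of symplectic spinors: complex polynomials in `l` variables. -/
abbrev Pol (l : ℕ) := MvPolynomial (Fin l) ℂ

/-- Components `ω_{ij}` of the standard symplectic form on `ℝ^{2l}`. -/
def om (l : ℕ) (i j : Fin (2*l)) : ℝ :=
  if (j : ℕ) = (i : ℕ) + l then 1 else if (i : ℕ) = (j : ℕ) + l then -1 else 0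

/-- Components `ω^{ij}`, defined by `Σ_k ω_{ik} ω^{jk} = δ_i^j`. -/
def omUp (l : ℕ) (i j : Fin (2*l)) : ℝ :=
  if (j : ℕ) = (i : ℕ) + l then 1 else if (i : ℕ) = (j : ℕ) + l then -1 else 0

/-- Symplectic Clifford multiplication by a basis vector `e_i`. -/
def cliff (l : ℕ) (i : Fin (2*l)) (f : Pol l) : Pol l :=
  if h : (i : ℕ) < l then Complex.I • (MvPolynomial.X (⟨(i : ℕ), h⟩ : Fin l) * f)
  else MvPolynomial.pderiv (⟨(i : ℕ) - l, by have := i.isLt; omega⟩ : Fin l) f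

/-- Symplectic Clifford multiplication by an arbitrary vector, extended ℝ-bilinearly. -/
def cliffV (l : ℕ) (v : Fin (2*l) → ℝ) (f : Pol l) : Pol l :=
  ∑ i, ((v i : ℝ) : ℂ) • cliff l i f

/-- Symplectic-spinor-valued `r`-forms (as functions of their `r` vector arguments). -/
abbrev Form (l r : ℕ) := (Fin r → (Fin (2*l) → ℝ)) → Pol l

/-- The standard basis vector `e_i` of `ℝ^{2l}`. -/
def basisVec (l : ℕ) (i : Fin (2*l)) : Fin (2*l) → ℝ := Pi.single i 1

/-- The operator `X`: `(Xφ)(v_1,…,v_{r+1}) = −Σ_a (−1)^{a+1} v_a · φ(v_1,…,v̂_a,…,v_{r+1})`. -/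
def Xop (l r : ℕ) (φ : Form l r) : Form l (r+1) :=
  fun v => -∑ a : Fin (r+1), ((-1 : ℂ)^(a : ℕ)) • cliffV l (v a) (φ (fun b => v (a.succAbove b)))

/-- The operator `Y`: `(Yφ)(v_1,…,v_r) = Σ_{i,j} ω^{ij} e_j · φ(e_i, v_1,…,v_r)`. -/
def Yop (l r : ℕ) (φ : Form l (r+1)) : Form l r :=
  fun v => ∑ i, ∑ j, ((omUp l i j : ℝ) : ℂ) • cliff l j (φ (Fin.cons (basisVec l i) v))

/-- The operator `H = XY + YX` (on 0-forms `Y` vanishes, so there `H = YX`). -/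
def Hop (l : ℕ) : {r : ℕ} → Form l r → Form l r
  | 0, φ => Yop l 0 (Xop l 0 φ)
  | (r+1), φ => Xop l r (Yop l r φ) + Yop l (r+1) (Xop l (r+1) φ)

/-- `X²Y²` on spinor-valued 2-forms. -/
def XXYY (l : ℕ) (φ : Form l 2) : Form l 2 := Xop l 1 (Xop l 0 (Yop l 0 (Yop l 1 φ)))

/-- `XY` on spinor-valued 2-forms. -/
def XY2 (l : ℕ) (φ : Form l 2) : Form l 2 := Xop l 1 (Yop l 1 φ)

/-- The projection `q^{20} = (1/l) X²Y²`. -/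
def q20 (l : ℕ) (φ : Form l 2) : Form l 2 := ((l : ℂ))⁻¹ • XXYY l φ

/-- The projection `q^{21} = (𝕚/(1−l)) (XY − (𝕚/l) X²Y²)`. -/
def q21 (l : ℕ) (φ : Form l 2) : Form l 2 :=
  (Complex.I / (1 - (l : ℂ))) • (XY2 l φ - (Complex.I / (l : ℂ)) • XXYY l φ)

/-- The projection `q^{22} = Id − q^{20} − q^{21}`. -/
def q22 (l : ℕ) (φ : Form l 2) : Form l 2 := φ - q20 l φ - q21 l φ

/-- The spinor-valued 2-form `c · ε^k ∧ ε^m ⊗ s`. -/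
def w2 (l : ℕ) (c : ℝ) (k m : Fin (2*l)) (s : Pol l) : Form l 2 :=
  fun v => ((c * (v 0 k * v 1 m - v 0 m * v 1 k) : ℝ) : ℂ) • s

/-- The symplectic Ricci tensor `σ_{ij} = Σ_{k,m} ω^{km} R_{mjki}`. -/
def ric (l : ℕ) (R : Fin (2*l) → Fin (2*l) → Fin (2*l) → Fin (2*l) → ℝ)
    (i j : Fin (2*l)) : ℝ :=
  ∑ k, ∑ m, omUp l k m * R m j k i

/-- `σ̃_{ijkl}` built from a symmetric tensor `σ`. -/
def st (l : ℕ) (σ : Fin (2*l) → Fin (2*l) → ℝ) (i j k m : Fin (2*l)) : ℝ :=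
  (1/(2*((l : ℝ)+1))) * (om l i m * σ j k - om l i k * σ j m
    + om l j m * σ i k - om l j k * σ i m + 2 * σ i j * om l k m)

/-- The symplectic Weyl tensor `W = R − σ̃`. -/
def weyl (l : ℕ) (R : Fin (2*l) → Fin (2*l) → Fin (2*l) → Fin (2*l) → ℝ)
    (i j k m : Fin (2*l)) : ℝ :=
  R i j k m - st l (ric l R) i j k m

/-- Raising all four indices: `T^{ijkm} = Σ ω^{ia}ω^{jb}ω^{kc}ω^{md} T_{abcd}`. -/
def upT (l : ℕ) (T : Fin (2*l) → Fin (2*l) → Fin (2*l) → Fin (2*l) → ℝ)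
    (i j k m : Fin (2*l)) : ℝ :=
  ∑ a, ∑ b, ∑ c, ∑ d, omUp l i a * omUp l j b * omUp l k c * omUp l m d * T a b c d

/-- Raising both indices of a 2-tensor: `σ^{ij} = Σ ω^{ia}ω^{jb} σ_{ab}`. -/
def up2 (l : ℕ) (σ : Fin (2*l) → Fin (2*l) → ℝ) (i j : Fin (2*l)) : ℝ :=
  ∑ a, ∑ b, omUp l i a * omUp l j b * σ a b

/-- The spinor-valued 2-form `(𝕚/2) Σ T^{ij}_{kl} ε^k ∧ ε^l ⊗ e_{ij}·φ` built from a
4-tensor `T` (used for `R^S φ`, `σ^S φ` and `W^S φ`). -/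
def curvS (l : ℕ) (T : Fin (2*l) → Fin (2*l) → Fin (2*l) → Fin (2*l) → ℝ)
    (φ : Pol l) : Form l 2 :=
  (Complex.I/2) • ∑ i, ∑ j, ∑ k, ∑ m,
    w2 l (∑ a, ∑ b, omUp l i a * omUp l j b * T a b k m) k m (cliff l i (cliff l j φ))

/-- The spinor-valued 2-form `Σ_{i,j,k,d,m} T^{ijk}_d ε^m ∧ ε^d ⊗ e_{mkij}·φ`. -/
def mixS (l : ℕ) (T : Fin (2*l) → Fin (2*l) → Fin (2*l) → Fin (2*l) → ℝ)
    (φ : Pol l) : Form l 2 :=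
  ∑ i, ∑ j, ∑ k, ∑ d, ∑ m,
    w2 l (∑ a, ∑ b, ∑ c, omUp l i a * omUp l j b * omUp l k c * T a b c d) m d
      (cliff l m (cliff l k (cliff l i (cliff l j φ))))


variable {l : ℕ}

def lo (l : ℕ) (a : Fin l) : Fin (2*l) := ⟨a.1, by have := a.2; omega⟩
def hi (l : ℕ) (a : Fin l) : Fin (2*l) := ⟨a.1 + l, by have := a.2; omega⟩

lemma sum_split {M : Type*} [AddCommMonoid M] (f : Fin (2*l) → M) :
    ∑ i, f i = ∑ a : Fin l, f (lo l a) + ∑ a : Fin l, f (hi l a) := by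
  have h : l + l = 2*l := by omega
  rw [← Fin.sum_congr' f h, Fin.sum_univ_add]
  congr 1 <;> (apply Finset.sum_congr rfl; intro a _; congr 1; ext; simp [lo, hi, Fin.cast])

lemma om_lo_lo (a b : Fin l) : om l (lo l a) (lo l b) = 0 := by
  have := a.2; have := b.2
  unfold om; rw [if_neg (by simp only [lo]; omega), if_neg (by simp only [lo]; omega)]

lemma om_hi_hi (a b : Fin l) : om l (hi l a) (hi l b) = 0 := by
  have := a.2; have := b.2
  unfold om; rw [if_neg (by simp only [hi]; omega), if_neg (by simp only [hi]; omega)]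

lemma om_lo_hi (a b : Fin l) : om l (lo l a) (hi l b) = if a = b then 1 else 0 := by
  have := a.2; have := b.2
  unfold om
  rcases eq_or_ne a b with h | h
  · subst h; simp [lo, hi]
  · rw [if_neg h, if_neg (by simpa [lo, hi, Fin.ext_iff] using fun hh => h (Fin.ext (by omega))),
      if_neg (by simp only [lo, hi]; omega)]

lemma om_hi_lo (a b : Fin l) : om l (hi l a) (lo l b) = if a = b then -1 else 0 := by
  have := a.2; have := b.2
  unfold om
  rcases eq_or_ne a b with h | h
  · subst h; rw [if_neg (by simp only [lo, hi]; omega)]; simp [lo, hi]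
  · rw [if_neg (by simp only [lo, hi]; omega), if_neg (by simpa [lo, hi, Fin.ext_iff] using fun hh => h (Fin.ext (by omega))), if_neg h]

@[simp] lemma lo_eq_lo {a b : Fin l} : lo l a = lo l b ↔ a = b := by
  simp [lo, Fin.ext_iff]

@[simp] lemma hi_eq_hi {a b : Fin l} : hi l a = hi l b ↔ a = b := by
  simp [hi, Fin.ext_iff]

@[simp] lemma lo_ne_hi {a b : Fin l} : lo l a ≠ hi l b := by
  have := a.2; simp [lo, hi, Fin.ext_iff]; omega

@[simp] lemma hi_ne_lo {a b : Fin l} : hi l a ≠ lo l b := by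
  have := b.2; simp [lo, hi, Fin.ext_iff]; omega

lemma cliff_lo (a : Fin l) (f : Pol l) :
    cliff l (lo l a) f = Complex.I • (X a * f) := by
  unfold cliff
  rw [dif_pos (show ((lo l a : Fin (2*l)) : ℕ) < l from a.2)]
  rfl

lemma cliff_hi (a : Fin l) (f : Pol l) :
    cliff l (hi l a) f = pderiv a f := by
  have h2 := a.2
  unfold cliff
  rw [dif_neg (by simp [hi])]
  congr 2
  ext
  simp [hi]

lemma sum_om_smul {M : Type*} [AddCommGroup M] [Module ℂ M]
    (G : Fin (2*l) → Fin (2*l) → M) :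
    ∑ i, ∑ j, ((om l i j : ℝ) : ℂ) • G i j
      = ∑ a : Fin l, (G (lo l a) (hi l a) - G (hi l a) (lo l a)) := by
  rw [sum_split (fun i => ∑ j, ((om l i j : ℝ) : ℂ) • G i j)]
  have h1 : ∀ a : Fin l, ∑ j, ((om l (lo l a) j : ℝ) : ℂ) • G (lo l a) j
      = G (lo l a) (hi l a) := by
    intro a
    rw [sum_split (fun j => ((om l (lo l a) j : ℝ) : ℂ) • G (lo l a) j)]
    simp [om_lo_lo, om_lo_hi, apply_ite (fun r : ℝ => (r:ℂ)), ite_smul]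
  have h2 : ∀ a : Fin l, ∑ j, ((om l (hi l a) j : ℝ) : ℂ) • G (hi l a) j
      = - G (hi l a) (lo l a) := by
    intro a
    rw [sum_split (fun j => ((om l (hi l a) j : ℝ) : ℂ) • G (hi l a) j)]
    simp [om_hi_hi, om_hi_lo, apply_ite (fun r : ℝ => (r:ℂ)), ite_smul]
  rw [Finset.sum_congr rfl (fun a _ => h1 a), Finset.sum_congr rfl (fun a _ => h2 a)]
  rw [← Finset.sum_add_distrib]
  simp [sub_eq_add_neg]

lemma lo_or_hi (i : Fin (2*l)) : (∃ a, i = lo l a) ∨ (∃ a, i = hi l a) := by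
  by_cases h : (i : ℕ) < l
  · exact Or.inl ⟨⟨i.1, h⟩, by ext; rfl⟩
  · refine Or.inr ⟨⟨i.1 - l, by have := i.2; omega⟩, ?_⟩
    ext; simp [hi]; omega

lemma cliff_smul (i : Fin (2*l)) (c : ℂ) (f : Pol l) :
    cliff l i (c • f) = c • cliff l i f := by
  unfold cliff
  split
  · rw [smul_comm, mul_smul_comm]
  · exact (pderiv _).map_smul c f

lemma cliff_sum {ι : Type*} (t : Finset ι) (i : Fin (2*l)) (f : ι → Pol l) :
    cliff l i (∑ x ∈ t, f x) = ∑ x ∈ t, cliff l i (f x) := by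
  unfold cliff
  split
  · rw [Finset.mul_sum, Finset.smul_sum]
  · exact map_sum _ f t

lemma pderiv_comm' (a b : Fin l) (f : Pol l) :
    pderiv a (pderiv b f) = pderiv b (pderiv a f) := by
  induction f using MvPolynomial.induction_on with
  | C c => simp
  | add p q hp hq => simp [map_add, hp, hq]
  | mul_X p i hp =>
      simp [pderiv_mul, map_add, hp, pderiv_X, Pi.single_apply, apply_ite (pderiv a),
        apply_ite (pderiv b), pderiv_one]
      ring

lemma cliff_comm (p q : Fin (2*l)) (f : Pol l) :
    cliff l p (cliff l q f) - cliff l q (cliff l p f)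
      = (-Complex.I * ((om l p q : ℝ) : ℂ)) • f := by
  have key : ∀ (a b : Fin l) (f : Pol l),
      cliff l (lo l a) (cliff l (hi l b) f) - cliff l (hi l b) (cliff l (lo l a) f)
        = (-Complex.I * ((om l (lo l a) (hi l b) : ℝ) : ℂ)) • f := by
    intro a b f
    rw [cliff_hi, cliff_lo, cliff_lo, cliff_hi, Derivation.map_smul, pderiv_mul, om_lo_hi]
    rcases eq_or_ne a b with h | h
    · subst h
      rw [pderiv_X_self, if_pos rfl]
      push_cast
      simp only [smul_eq_C_mul, map_one, map_neg, one_mul, mul_one]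
      ring
    · rw [pderiv_X_of_ne h, if_neg h]
      simp
  rcases lo_or_hi p with ⟨a, rfl⟩ | ⟨a, rfl⟩ <;> rcases lo_or_hi q with ⟨b, rfl⟩ | ⟨b, rfl⟩
  · rw [cliff_lo, cliff_lo, cliff_lo, cliff_lo, om_lo_lo]
    push_cast
    rw [mul_zero, zero_smul, sub_eq_zero]
    simp only [smul_eq_C_mul]
    ring
  · exact key a b f
  · have h := key b a f
    rw [om_lo_hi] at h
    rw [← neg_sub, h, om_hi_lo]
    rcases eq_or_ne a b with hh | hh
    · subst hh; simp
    · simp [hh, Ne.symm hh]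
  · rw [cliff_hi, cliff_hi, cliff_hi, cliff_hi, om_hi_hi, pderiv_comm']
    simp

lemma omUp_eq_om : omUp l = om l := rfl

lemma sum_om_mul (F : Fin (2*l) → Fin (2*l) → ℂ) :
    ∑ i, ∑ j, ((om l i j : ℝ) : ℂ) * F i j
      = ∑ a : Fin l, (F (lo l a) (hi l a) - F (hi l a) (lo l a)) := by
  simpa [smul_eq_mul] using sum_om_smul (l := l) (M := ℂ) F

lemma cliffV_smul (v : Fin (2*l) → ℝ) (c : ℂ) (f : Pol l) :
    cliffV l v (c • f) = c • cliffV l v f := by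
  unfold cliffV
  rw [Finset.smul_sum]
  exact Finset.sum_congr rfl fun i _ => by rw [cliff_smul, smul_comm]

lemma cliffV_basis (i : Fin (2*l)) (f : Pol l) :
    cliffV l (basisVec l i) f = cliff l i f := by
  unfold cliffV basisVec
  simp [Pi.single_apply, apply_ite (fun r : ℝ => (r : ℂ)), ite_smul]

lemma cliffV_comm (u w : Fin (2*l) → ℝ) (f : Pol l) :
    cliffV l u (cliffV l w f) - cliffV l w (cliffV l u f)
      = (-Complex.I * ∑ p, ∑ q, ((om l p q : ℝ) : ℂ) * ((u p : ℝ) : ℂ) * ((w q : ℝ) : ℂ)) • f := by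
  have e1 : cliffV l u (cliffV l w f)
      = ∑ p, ∑ q, (((u p : ℝ) : ℂ) * ((w q : ℝ) : ℂ)) • cliff l p (cliff l q f) := by
    unfold cliffV
    refine Finset.sum_congr rfl fun p _ => ?_
    rw [cliff_sum, Finset.smul_sum]
    exact Finset.sum_congr rfl fun q _ => by rw [cliff_smul, mul_smul, smul_comm]
  have e2 : cliffV l w (cliffV l u f)
      = ∑ p, ∑ q, (((u p : ℝ) : ℂ) * ((w q : ℝ) : ℂ)) • cliff l q (cliff l p f) := by
    unfold cliffV
    rw [Finset.sum_comm]
    refine Finset.sum_congr rfl fun p _ => ?_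
    rw [cliff_sum, Finset.smul_sum]
    refine Finset.sum_congr rfl fun q _ => by rw [cliff_smul, mul_comm, mul_smul, smul_comm]
  rw [e1, e2, ← Finset.sum_sub_distrib]
  rw [Finset.mul_sum, Finset.sum_smul]
  refine Finset.sum_congr rfl fun p _ => ?_
  rw [← Finset.sum_sub_distrib, Finset.mul_sum, Finset.sum_smul]
  refine Finset.sum_congr rfl fun q _ => ?_
  rw [← smul_sub, cliff_comm, smul_smul]
  congr 1
  ring

lemma psi_apply (s : Pol l) (g : Fin 2 → Fin (2*l) → ℝ) :
    (∑ i, ∑ j, w2 l (om l i j) i j s) g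
      = (∑ i, ∑ j, ((om l i j * (g 0 i * g 1 j - g 0 j * g 1 i) : ℝ) : ℂ)) • s := by
  simp [w2, Finset.sum_apply, Finset.sum_smul]

lemma row_lo (a : Fin l) (w : Fin (2*l) → ℝ) :
    ∑ p, ∑ q, ((om l p q : ℝ) : ℂ)
        * (((basisVec l (lo l a) p * w q - basisVec l (lo l a) q * w p : ℝ)) : ℂ)
      = 2 * ((w (hi l a) : ℝ) : ℂ) := by
  rw [sum_om_mul (fun p q => (((basisVec l (lo l a) p * w q - basisVec l (lo l a) q * w p : ℝ)) : ℂ))]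
  simp [basisVec, Pi.single_apply, Finset.sum_ite_eq', two_mul, Finset.sum_add_distrib,
    apply_ite (fun r : ℝ => (r : ℂ))]

lemma row_hi (a : Fin l) (w : Fin (2*l) → ℝ) :
    ∑ p, ∑ q, ((om l p q : ℝ) : ℂ)
        * (((basisVec l (hi l a) p * w q - basisVec l (hi l a) q * w p : ℝ)) : ℂ)
      = -(2 * ((w (lo l a) : ℝ) : ℂ)) := by
  rw [sum_om_mul (fun p q => (((basisVec l (hi l a) p * w q - basisVec l (hi l a) q * w p : ℝ)) : ℂ))]
  simp [basisVec, Pi.single_apply, Finset.sum_ite_eq', two_mul, Finset.sum_add_distrib,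
    apply_ite (fun r : ℝ => (r : ℂ))]
  ring

lemma Y1 (s : Pol l) :
    Yop l 1 (∑ i, ∑ j, w2 l (om l i j) i j s)
      = fun v => (2 : ℂ) • cliffV l (v 0) s := by
  funext v
  unfold Yop
  rw [omUp_eq_om]
  have hc : ∀ i : Fin (2*l),
      (∑ i', ∑ j, w2 l (om l i' j) i' j s) (Fin.cons (basisVec l i) v)
        = (∑ p, ∑ q, ((om l p q : ℝ) : ℂ)
            * (((basisVec l i p * v 0 q - basisVec l i q * v 0 p : ℝ)) : ℂ)) • s := by
    intro i
    rw [psi_apply]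
    congr 1
    refine Finset.sum_congr rfl fun p _ => Finset.sum_congr rfl fun q _ => ?_
    have h0 : (Fin.cons (basisVec l i) v : Fin 2 → Fin (2*l) → ℝ) 0 = basisVec l i :=
      Fin.cons_zero _ _
    have h1 : (Fin.cons (basisVec l i) v : Fin 2 → Fin (2*l) → ℝ) 1 = v 0 := by
      rw [show (1 : Fin 2) = Fin.succ 0 from rfl, Fin.cons_succ]
    rw [h0, h1]
    push_cast
    ring
  calc ∑ i, ∑ j, ((om l i j : ℝ) : ℂ)
        • cliff l j ((∑ i', ∑ j', w2 l (om l i' j') i' j' s) (Fin.cons (basisVec l i) v))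
      = ∑ i, ∑ j, ((om l i j : ℝ) : ℂ)
          • ((∑ p, ∑ q, ((om l p q : ℝ) : ℂ)
            * (((basisVec l i p * v 0 q - basisVec l i q * v 0 p : ℝ)) : ℂ)) • cliff l j s) := by
        refine Finset.sum_congr rfl fun i _ => Finset.sum_congr rfl fun j _ => ?_
        rw [hc i, cliff_smul]
    _ = ∑ a : Fin l,
          ((2 * ((v 0 (hi l a) : ℝ) : ℂ)) • cliff l (hi l a) s
            + (2 * ((v 0 (lo l a) : ℝ) : ℂ)) • cliff l (lo l a) s) := by
        rw [sum_om_smul (fun i j => (∑ p, ∑ q, ((om l p q : ℝ) : ℂ)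
            * (((basisVec l i p * v 0 q - basisVec l i q * v 0 p : ℝ)) : ℂ)) • cliff l j s)]
        refine Finset.sum_congr rfl fun a _ => ?_
        rw [row_lo, row_hi, sub_eq_add_neg, neg_smul, neg_neg]
    _ = (2 : ℂ) • cliffV l (v 0) s := by
        unfold cliffV
        rw [Finset.smul_sum, sum_split (fun i => (2:ℂ) • (((v 0 i : ℝ) : ℂ) • cliff l i s)),
          ← Finset.sum_add_distrib]
        refine Finset.sum_congr rfl fun a _ => ?_
        rw [smul_smul, smul_smul, add_comm]

lemma Y2 (s : Pol l) :
    Yop l 0 (fun v : Fin 1 → Fin (2*l) → ℝ => (2 : ℂ) • cliffV l (v 0) s)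
      = fun _ => ((2 * l : ℂ) * Complex.I) • s := by
  funext v
  unfold Yop
  rw [omUp_eq_om]
  simp only [Fin.cons_zero, cliffV_basis, cliff_smul]
  rw [sum_om_smul (fun i j => (2:ℂ) • cliff l j (cliff l i s))]
  have hterm : ∀ a : Fin l,
      (2:ℂ) • cliff l (hi l a) (cliff l (lo l a) s)
        - (2:ℂ) • cliff l (lo l a) (cliff l (hi l a) s) = (2 * Complex.I) • s := by
    intro a
    rw [← smul_sub, cliff_comm, om_hi_lo, if_pos rfl, smul_smul]
    norm_num
  rw [Finset.sum_congr rfl fun a _ => hterm a, Finset.sum_const, Finset.card_univ,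
    Fintype.card_fin, ← Nat.cast_smul_eq_nsmul ℂ, smul_smul]
  congr 1
  ring

lemma X1 (s : Pol l) :
    Xop l 0 (fun _ : Fin 0 → Fin (2*l) → ℝ => ((2 * l : ℂ) * Complex.I) • s)
      = fun v => (-((2 * l : ℂ) * Complex.I)) • cliffV l (v 0) s := by
  funext v
  unfold Xop
  rw [Fin.sum_univ_one]
  simp [cliffV_smul]

lemma scalar_eq (u w : Fin (2*l) → ℝ) :
    ∑ i, ∑ j, ((om l i j * (u i * w j - u j * w i) : ℝ) : ℂ)
      = 2 * ∑ p, ∑ q, ((om l p q : ℝ) : ℂ) * ((u p : ℝ) : ℂ) * ((w q : ℝ) : ℂ) := by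
  have h1 : ∑ i, ∑ j, ((om l i j * (u i * w j - u j * w i) : ℝ) : ℂ)
      = ∑ i, ∑ j, ((om l i j : ℝ) : ℂ)
          * (((u i : ℝ):ℂ) * ((w j : ℝ):ℂ) - ((u j : ℝ):ℂ) * ((w i : ℝ):ℂ)) := by
    refine Finset.sum_congr rfl fun i _ => Finset.sum_congr rfl fun j _ => ?_
    push_cast
    ring
  have h2 : ∑ p, ∑ q, ((om l p q : ℝ) : ℂ) * ((u p : ℝ) : ℂ) * ((w q : ℝ) : ℂ)
      = ∑ p, ∑ q, ((om l p q : ℝ) : ℂ) * (((u p : ℝ) : ℂ) * ((w q : ℝ) : ℂ)) := by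
    refine Finset.sum_congr rfl fun p _ => Finset.sum_congr rfl fun q _ => ?_
    ring
  rw [h1, h2, sum_om_mul (fun p q => ((u p : ℝ):ℂ) * ((w q : ℝ):ℂ) - ((u q : ℝ):ℂ) * ((w p : ℝ):ℂ)),
    sum_om_mul (fun p q => ((u p : ℝ):ℂ) * ((w q : ℝ):ℂ)), Finset.mul_sum]
  refine Finset.sum_congr rfl fun a _ => ?_
  ring

lemma X2 (c : ℂ) (s : Pol l) :
    Xop l 1 (fun v : Fin 1 → Fin (2*l) → ℝ => c • cliffV l (v 0) s)
      = fun v => (-c) • (cliffV l (v 0) (cliffV l (v 1) s)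
          - cliffV l (v 1) (cliffV l (v 0) s)) := by
  funext v
  unfold Xop
  rw [Fin.sum_univ_two]
  have e0 : (fun b : Fin 1 => v ((0 : Fin 2).succAbove b)) = fun _ : Fin 1 => v 1 := by
    funext b; rw [Subsingleton.elim b 0]; rfl
  have e1 : (fun b : Fin 1 => v ((1 : Fin 2).succAbove b)) = fun _ : Fin 1 => v 0 := by
    funext b; rw [Subsingleton.elim b 0]; rfl
  simp only [e0, e1, Fin.val_zero, Fin.val_one, pow_zero, pow_one, one_smul,
    neg_one_smul, cliffV_smul, smul_sub, neg_smul]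
  abel

/-- `ψ = Σ_{i,j} ω_{ij} ε^i ∧ ε^j ⊗ s` satisfies `X²Y²ψ = l·ψ`. -/
theorem stmt_7 (l : ℕ) (hl : 2 ≤ l) (s : Pol l) :
    XXYY l (∑ i, ∑ j, w2 l (om l i j) i j s)
      = (l : ℂ) • (∑ i, ∑ j, w2 l (om l i j) i j s) := by
  unfold XXYY
  rw [Y1, Y2, X1, X2]
  funext v
  rw [Pi.smul_apply, psi_apply, cliffV_comm, smul_smul, scalar_eq, smul_smul, neg_neg]
  congr 1
  rw [show (2 * (l:ℂ) * Complex.I) * (-Complex.I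
      * ∑ p, ∑ q, ((om l p q : ℝ):ℂ) * ((v 0 p : ℝ):ℂ) * ((v 1 q : ℝ):ℂ))
    = (Complex.I * Complex.I) * (-(2 * (l:ℂ)
      * ∑ p, ∑ q, ((om l p q : ℝ):ℂ) * ((v 0 p : ℝ):ℂ) * ((v 1 q : ℝ):ℂ))) by ring,
    Complex.I_mul_I]
  ring

end
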